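/- Let σ : S → A be a pre-strategy, let z, z' ∈ C(CC_A ⊙ S), and let (x, y), (x', y') ∈ C(S) × C(A) be the representations via Ψ of their minimal witnesses in C(CC_A ⊛ S). Then z ⊑_{CC_A ⊙ S} z' (Scott order on the composition, whose polarities are inherited from the right-hand copy of A) if and only if y ⊑_A y' and x ⊆ x'. -/

import Mathlib

/-- An event structure presented as raw data: a set of events, a causality
relation and a consistency predicate on (finite) sets of events. -/
structure ES where
  Evt : Type
  le : Evt → Evt → Prop
  Con : Set (Set Evt)

namespace ES

/-- Strict causality. -/
def lt (E : ES) (a b : E.Evt) : Prop := E.le a b ∧ a ≠ b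

/-- The axioms of event structures: `le` is a partial order, causes `[e]` are
finite, consistency is a nonempty collection of finite sets, closed under
subsets, containing all singletons, and closed under adding causal
dependencies. -/
def IsES (E : ES) : Prop :=
  (∀ e, E.le e e) ∧
  (∀ a b c, E.le a b → E.le b c → E.le a c) ∧
  (∀ a b, E.le a b → E.le b a → a = b) ∧
  (∀ e, {e' | E.le e' e}.Finite) ∧
  E.Con.Nonempty ∧
  (∀ X ∈ E.Con, X.Finite) ∧
  (∀ e, ({e} : Set E.Evt) ∈ E.Con) ∧
  (∀ X ∈ E.Con, ∀ Y, Y ⊆ X → Y ∈ E.Con) ∧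
  (∀ X ∈ E.Con, ∀ e ∈ X, ∀ e', E.le e' e → insert e' X ∈ E.Con)

/-- A (finite) configuration: a finite, consistent and down-closed set of events. -/
def Config (E : ES) (x : Set E.Evt) : Prop :=
  x.Finite ∧ (∀ Y, Y ⊆ x → Y.Finite → Y ∈ E.Con) ∧
  ∀ e ∈ x, ∀ e', E.le e' e → e' ∈ x

/-- Immediate causality `e ⇢ e'`. -/
def imc (E : ES) (a b : E.Evt) : Prop :=
  E.lt a b ∧ ∀ c, E.le a c → E.le c b → c = a ∨ c = b

/-- Simple parallel composition of event structures. -/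
def par (E F : ES) : ES where
  Evt := E.Evt ⊕ F.Evt
  le := fun p q =>
    match p, q with
    | Sum.inl a, Sum.inl b => E.le a b
    | Sum.inr a, Sum.inr b => F.le a b
    | _, _ => False
  Con := {X | Sum.inl ⁻¹' X ∈ E.Con ∧ Sum.inr ⁻¹' X ∈ F.Con}

/-- Projection (hiding): restrict an event structure to a subset `V` of events. -/
def proj (E : ES) (V : Set E.Evt) : ES where
  Evt := ↥V
  le := fun a b => E.le a.val b.val
  Con := {X | Subtype.val '' X ∈ E.Con}

end ES

/-- A (total) map of event structures: preserves configurations and is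
injective on each configuration. -/
def IsMap (E F : ES) (f : E.Evt → F.Evt) : Prop :=
  (∀ x, E.Config x → F.Config (f '' x)) ∧ ∀ x, E.Config x → Set.InjOn f x
/-- An event structure with polarities (`true` = positive/Player,
`false` = negative/Opponent). -/
structure ESP extends ES where
  pol : Evt → Bool

namespace ESP

/-- The dual game: polarities reversed. -/
def dual (A : ESP) : ESP where
  toES := A.toES
  pol := fun a => !A.pol a

/-- Simple parallel composition of games. -/
def par (A B : ESP) : ESP where
  toES := A.toES.par B.toES
  pol := Sum.elim A.pol B.pol

end ESP

/-- A pre-strategy on the game `A`: a polarity-preserving map of event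
structures `σ : S → A`. -/
def IsPreStrategy (S A : ESP) (σ : S.Evt → A.Evt) : Prop :=
  IsMap S.toES A.toES σ ∧ ∀ s, A.pol (σ s) = S.pol s

/-- `polExt pol b x y` means `x ⊆ y` and all events of `y \ x` have polarity `b`;
so `polExt pol true x y` is `x ⊆⁺ y` and `polExt pol false x y` is `x ⊆⁻ y`. -/
def polExt {α : Type} (pol : α → Bool) (b : Bool) (x y : Set α) : Prop :=
  x ⊆ y ∧ ∀ a ∈ y, a ∉ x → pol a = b

/-- The Scott order: `x ⊑ y` iff `x ⊇⁻ (x ∩ y) ⊆⁺ y`. -/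
def scottLE {α : Type} (pol : α → Bool) (x y : Set α) : Prop :=
  polExt pol false (x ∩ y) x ∧ polExt pol true (x ∩ y) y

/-- Courtesy: immediate causal links other than `− ⇢ +` are sent to immediate
causal links of the game. -/
def Courteous (S A : ESP) (σ : S.Evt → A.Evt) : Prop :=
  ∀ s s', S.toES.imc s s' → (S.pol s, S.pol s') ≠ (false, true) →
    A.toES.imc (σ s) (σ s')

/-- Receptivity: every negative extension of `σ x` in the game is matched by a
unique extension of `x`. -/
def Receptive (S A : ESP) (σ : S.Evt → A.Evt) : Prop :=
  ∀ x, S.toES.Config x → ∀ a, A.pol a = false → a ∉ σ '' x →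
    A.toES.Config (insert a (σ '' x)) →
    ∃! s, s ∉ x ∧ S.toES.Config (insert s x) ∧ σ s = a
/-- The generating relation of copycat causality on `A^⊥ ∥ A`:
the causality of `A^⊥ ∥ A` together with the links from each negative
occurrence to the corresponding positive occurrence on the other side. -/
def ccGen (A : ESP) : (A.Evt ⊕ A.Evt) → (A.Evt ⊕ A.Evt) → Prop :=
  fun p q => (A.dual.par A).le p q ∨
    (∃ a, A.pol a = true ∧ p = Sum.inl a ∧ q = Sum.inr a) ∨
    (∃ a, A.pol a = false ∧ p = Sum.inr a ∧ q = Sum.inl a)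

/-- The copycat structure `CC_A` on the game `A`. -/
def CC (A : ESP) : ESP where
  Evt := A.Evt ⊕ A.Evt
  le := Relation.ReflTransGen (ccGen A)
  Con := {X | {e | ∃ e' ∈ X, Relation.ReflTransGen (ccGen A) e e'} ∈ (A.dual.par A).Con}
  pol := (A.dual.par A).pol
/-- The relation `◁` generating the order on the graph `G` of a bijection:
`p ◁ q` when both are in `G` and `p.1 <_S q.1` or `p.2 <_T q.2`. -/
def gRel (S T : ES) (G : Set (S.Evt × T.Evt)) :
    (S.Evt × T.Evt) → (S.Evt × T.Evt) → Prop :=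
  fun p q => p ∈ G ∧ q ∈ G ∧ (S.lt p.1 q.1 ∨ T.lt p.2 q.2)

/-- The graph `G` is secured: the reflexive-transitive closure of `◁` on `G`
is antisymmetric (hence a partial order). -/
def SecuredOn (S T : ES) (G : Set (S.Evt × T.Evt)) : Prop :=
  ∀ p q, Relation.ReflTransGen (gRel S T G) p q →
    Relation.ReflTransGen (gRel S T G) q p → p = q

/-- `G` is (the graph of) a secured bijection `φ : x ≃ σ x = τ y ≃ y` between
configurations `x ∈ C(S)` and `y ∈ C(T)`, an element of `SB(σ, τ)`. -/
def IsSecBij (S T A : ES) (σ : S.Evt → A.Evt) (τ : T.Evt → A.Evt)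
    (G : Set (S.Evt × T.Evt)) : Prop :=
  S.Config (Prod.fst '' G) ∧ T.Config (Prod.snd '' G) ∧
  (∀ p ∈ G, σ p.1 = τ p.2) ∧
  (∀ s ∈ Prod.fst '' G, ∀ t ∈ Prod.snd '' G, σ s = τ t → (s, t) ∈ G) ∧
  σ '' (Prod.fst '' G) = τ '' (Prod.snd '' G) ∧
  SecuredOn S T G

/-- `G` has a top (greatest) element for the induced order. -/
def IsPrime (S T : ES) (G : Set (S.Evt × T.Evt)) : Prop :=
  ∃ p ∈ G, ∀ q ∈ G, Relation.ReflTransGen (gRel S T G) q p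

/-- The interaction `S ∧ T` of `σ : S → A` and `τ : T → A`: events are the
prime secured bijections, causality is inclusion of graphs, and a finite set
of events is consistent when the union of their graphs is a secured bijection. -/
def Interaction (S T A : ES) (σ : S.Evt → A.Evt) (τ : T.Evt → A.Evt) : ES where
  Evt := {G : Set (S.Evt × T.Evt) // IsSecBij S T A σ τ G ∧ IsPrime S T G}
  le := fun G G' => G.val ⊆ G'.val
  Con := {X | X.Finite ∧ IsSecBij S T A σ τ (⋃ G ∈ X, G.val)}
/-- The interaction `CC_A ⊛ S`: the pullback of `σ ∥ id_A : S ∥ A → A ∥ A`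
and `ccc_A = id : CC_A → A ∥ A` (polarities ignored). -/
def ccInterES (A S : ESP) (σ : S.Evt → A.Evt) : ES :=
  Interaction (S.toES.par A.toES) (CC A).toES (A.toES.par A.toES)
    (Sum.map σ id) id

/-- The graph of the bijection `x ∥ y ≃ σ x ∥ y` determined by a pair of
configurations `(x, y) ∈ C(S) × C(A)` (the secured bijection `Ψ⁻¹(x, y)`). -/
def ccGraph (A S : ESP) (σ : S.Evt → A.Evt) (xS : Set S.Evt) (xA : Set A.Evt) :
    Set ((S.Evt ⊕ A.Evt) × (A.Evt ⊕ A.Evt)) :=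
  {p | p.1 ∈ Sum.inl '' xS ∪ Sum.inr '' xA ∧ p.2 = Sum.map σ id p.1}

/-- All maximal events of the graph `G` (for its induced order) are visible,
i.e. project to the right-hand copy of `A`. -/
def MaxVis (A S : ESP) (σ : S.Evt → A.Evt)
    (G : Set ((S.Evt ⊕ A.Evt) × (A.Evt ⊕ A.Evt))) : Prop :=
  ∀ p ∈ G, (∀ q ∈ G, Relation.ReflTransGen
      (gRel (S.toES.par A.toES) (CC A).toES G) p q → q = p) →
    ∃ a : A.Evt, p.1 = Sum.inr a
/-- Visibility of an event of `CC_A ⊛ S`: its top synchronised pair projects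
to the right-hand copy of `A`. -/
def ccVis (A S : ESP) (σ : S.Evt → A.Evt) (G : (ccInterES A S σ).Evt) : Prop :=
  ∃ a : A.Evt,
    ((Sum.inr a, Sum.inr a) : (S.Evt ⊕ A.Evt) × (A.Evt ⊕ A.Evt)) ∈ G.val ∧
    ∀ q ∈ G.val, Relation.ReflTransGen
      (gRel (S.toES.par A.toES) (CC A).toES G.val) q (Sum.inr a, Sum.inr a)

/-- The composition `CC_A ⊙ S`: the projection of `CC_A ⊛ S` to its visible
events. -/
def ccCompES (A S : ESP) (σ : S.Evt → A.Evt) : ES :=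
  (ccInterES A S σ).proj {G | ccVis A S σ G}

/-- The labelling map `ccc_A ⊙ σ : CC_A ⊙ S → A` of the composition. -/
noncomputable def ccCompLabel (A S : ESP) (σ : S.Evt → A.Evt)
    (G : (ccCompES A S σ).Evt) : A.Evt :=
  Exists.choose (G.prop : ccVis A S σ G.val)

/-- The composition `CC_A ⊙ S` as an esp, with polarities inherited from the
right-hand copy of `A`. -/
noncomputable def ccCompESP (A S : ESP) (σ : S.Evt → A.Evt) : ESP where
  toES := ccCompES A S σ
  pol := fun G => A.pol (ccCompLabel A S σ G)

/-- The union of the graphs of the events of the minimal witness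
`[z] ∈ C(CC_A ⊛ S)` of a configuration `z ∈ C(CC_A ⊙ S)`. -/
def ccWitUnion (A S : ESP) (σ : S.Evt → A.Evt)
    (z : Set (ccCompES A S σ).Evt) :
    Set ((S.Evt ⊕ A.Evt) × (A.Evt ⊕ A.Evt)) :=
  ⋃ H ∈ {H : (ccInterES A S σ).Evt | ∃ G ∈ z, H.val ⊆ G.val.val}, H.val

/-- The `C(S)` component `y_S` of the representation via `Ψ` of the minimal
witness of `z ∈ C(CC_A ⊙ S)`. -/
def ccWitS (A S : ESP) (σ : S.Evt → A.Evt)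
    (z : Set (ccCompES A S σ).Evt) : Set S.Evt :=
  Sum.inl ⁻¹' (Prod.fst '' ccWitUnion A S σ z)

/-- The `C(A)` component `y_A` of the representation via `Ψ` of the minimal
witness of `z ∈ C(CC_A ⊙ S)`. -/
def ccWitA (A S : ESP) (σ : S.Evt → A.Evt)
    (z : Set (ccCompES A S σ).Evt) : Set A.Evt :=
  Sum.inr ⁻¹' (Prod.fst '' ccWitUnion A S σ z)

namespace CCAux

open Relation

variable {A S : ESP} {σ : S.Evt → A.Evt}

/-- The union of the graphs of the events of `z`. -/
def ccW (A S : ESP) (σ : S.Evt → A.Evt) (z : Set (ccCompES A S σ).Evt) :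
    Set ((S.Evt ⊕ A.Evt) × (A.Evt ⊕ A.Evt)) :=
  ⋃ G ∈ z, (G.val.val : Set ((S.Evt ⊕ A.Evt) × (A.Evt ⊕ A.Evt)))

/-- Short-hand for the relation generating the order on graphs. -/
abbrev gr (A S : ESP) (W : Set ((S.Evt ⊕ A.Evt) × (A.Evt ⊕ A.Evt))) :
    ((S.Evt ⊕ A.Evt) × (A.Evt ⊕ A.Evt)) → ((S.Evt ⊕ A.Evt) × (A.Evt ⊕ A.Evt)) → Prop :=
  gRel (S.toES.par A.toES) (CC A).toES W

/-- Short-hand for secured bijections in the interaction with copycat. -/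
abbrev SB (A S : ESP) (σ : S.Evt → A.Evt)
    (W : Set ((S.Evt ⊕ A.Evt) × (A.Evt ⊕ A.Evt))) : Prop :=
  IsSecBij (S.toES.par A.toES) (CC A).toES (A.toES.par A.toES) (Sum.map σ id) id W

lemma gr_mono {W W' : Set ((S.Evt ⊕ A.Evt) × (A.Evt ⊕ A.Evt))} (h : W ⊆ W')
    {p q} (hpq : gr A S W p q) : gr A S W' p q :=
  ⟨h hpq.1, h hpq.2.1, hpq.2.2⟩

lemma rtg_mono {W W' : Set ((S.Evt ⊕ A.Evt) × (A.Evt ⊕ A.Evt))} (h : W ⊆ W')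
    {p q} (hpq : ReflTransGen (gr A S W) p q) : ReflTransGen (gr A S W') p q :=
  by
    induction hpq with
    | refl => exact ReflTransGen.refl
    | tail _ hbc ih => exact ih.tail (gr_mono h hbc)

lemma ccW_eq (z : Set (ccCompES A S σ).Evt) : ccWitUnion A S σ z = ccW A S σ z := by
  ext p
  constructor
  · intro hp0
    obtain ⟨H, ⟨G, hG, hsub⟩, hp⟩ := Set.mem_iUnion₂.1 hp0
    exact Set.mem_iUnion₂.2 ⟨G, hG, hsub hp⟩
  · intro hp0
    obtain ⟨G, hG, hp⟩ := Set.mem_iUnion₂.1 hp0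
    exact Set.mem_iUnion₂.2 ⟨G.val, ⟨G, hG, le_refl _⟩, hp⟩

lemma mem_ccW {z : Set (ccCompES A S σ).Evt} {p} :
    p ∈ ccW A S σ z ↔ ∃ G ∈ z, p ∈ G.val.val := by
  constructor
  · intro hp0
    obtain ⟨G, hG, hp⟩ := Set.mem_iUnion₂.1 hp0
    exact ⟨G, hG, hp⟩
  · rintro ⟨G, hG, hp⟩
    exact Set.mem_iUnion₂.2 ⟨G, hG, hp⟩

lemma secbij_ccW {z : Set (ccCompES A S σ).Evt} (hz : (ccCompES A S σ).Config z) :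
    SB A S σ (ccW A S σ z) := by
  have hcon : Subtype.val '' z ∈ (ccInterES A S σ).Con := hz.2.1 z subset_rfl hz.1
  have h2 := hcon.2
  have heq : (⋃ G ∈ Subtype.val '' z, G.val) = ccW A S σ z := by
    ext p
    constructor
    · intro hp0
      obtain ⟨G, ⟨K, hK, rfl⟩, hp⟩ := Set.mem_iUnion₂.1 hp0
      exact Set.mem_iUnion₂.2 ⟨K, hK, hp⟩
    · intro hp0
      obtain ⟨K, hK, hp⟩ := Set.mem_iUnion₂.1 hp0
      exact Set.mem_iUnion₂.2 ⟨K.val, ⟨K, hK, rfl⟩, hp⟩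
  have h3 : SB A S σ (⋃ G ∈ Subtype.val '' z, G.val) := h2
  exact Eq.mp (congrArg (SB A S σ) heq) h3

lemma pair_snd {W} (h : SB A S σ W) {p} (hp : p ∈ W) : Sum.map σ id p.1 = p.2 :=
  h.2.2.1 p hp

lemma mem_of_fst {W} (h : SB A S σ W) {e} (he : e ∈ Prod.fst '' W) :
    (e, Sum.map σ id e) ∈ W := by
  obtain ⟨p, hp, rfl⟩ := he
  have h2 := pair_snd h hp
  have hpe : p = (p.1, Sum.map σ id p.1) := Prod.ext rfl h2.symm
  rwa [← hpe]

lemma shape {W} (h : SB A S σ W) {p} (hp : p ∈ W) :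
    (∃ s, p = (Sum.inl s, Sum.inl (σ s))) ∨ (∃ b, p = (Sum.inr b, Sum.inr b)) := by
  have h2 := pair_snd h hp
  obtain ⟨p1, p2⟩ := p
  dsimp at h2
  cases p1 with
  | inl s => exact Or.inl ⟨s, by simp [← h2]⟩
  | inr b => exact Or.inr ⟨b, by simp [← h2]⟩

lemma par_le_elim {E F : ES} {p q : (E.par F).Evt} (h : (E.par F).le p q) :
    (∃ a b, p = Sum.inl a ∧ q = Sum.inl b ∧ E.le a b) ∨
    (∃ a b, p = Sum.inr a ∧ q = Sum.inr b ∧ F.le a b) := by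
  cases p with
  | inl a =>
    cases q with
    | inl b => exact Or.inl ⟨a, b, rfl, rfl, h⟩
    | inr b => exact (h : False).elim
  | inr a =>
    cases q with
    | inl b => exact (h : False).elim
    | inr b => exact Or.inr ⟨a, b, rfl, rfl, h⟩

lemma config_par_left {E F : ES} {X : Set (E.par F).Evt} (h : (E.par F).Config X) :
    E.Config (Sum.inl ⁻¹' X) := by
  refine ⟨h.1.preimage (Sum.inl_injective.injOn), ?_, ?_⟩
  · intro Y hY hYf
    have h1 : Sum.inl '' Y ∈ (E.par F).Con := by
      refine h.2.1 _ ?_ (hYf.image _)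
      rintro _ ⟨y, hy, rfl⟩
      exact hY hy
    have h2 := h1.1
    rwa [Set.preimage_image_eq Y Sum.inl_injective] at h2
  · intro e he e' hle
    exact h.2.2 (Sum.inl e) he (Sum.inl e') (hle : E.le e' e)

lemma config_par_right {E F : ES} {X : Set (E.par F).Evt} (h : (E.par F).Config X) :
    F.Config (Sum.inr ⁻¹' X) := by
  refine ⟨h.1.preimage (Sum.inr_injective.injOn), ?_, ?_⟩
  · intro Y hY hYf
    have h1 : Sum.inr '' Y ∈ (E.par F).Con := by
      refine h.2.1 _ ?_ (hYf.image _)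
      rintro _ ⟨y, hy, rfl⟩
      exact hY hy
    have h2 := h1.2
    rwa [Set.preimage_image_eq Y Sum.inr_injective] at h2
  · intro e he e' hle
    exact h.2.2 (Sum.inr e) he (Sum.inr e') (hle : F.le e' e)

/-- The `S`-component of a secured bijection. -/
def xsOf (A S : ESP) (σ : S.Evt → A.Evt) (W : Set ((S.Evt ⊕ A.Evt) × (A.Evt ⊕ A.Evt))) :
    Set S.Evt := {s | (Sum.inl s, Sum.inl (σ s)) ∈ W}

/-- The visible (`A`-)component of a secured bijection. -/
def ysOf (A S : ESP) (W : Set ((S.Evt ⊕ A.Evt) × (A.Evt ⊕ A.Evt))) :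
    Set A.Evt := {b | (Sum.inr b, Sum.inr b) ∈ W}

lemma xsOf_eq {W} (h : SB A S σ W) : xsOf A S σ W = Sum.inl ⁻¹' (Prod.fst '' W) := by
  ext s
  constructor
  · intro hs
    exact ⟨_, hs, rfl⟩
  · intro hs
    have := mem_of_fst h hs
    simpa [xsOf] using this

lemma ysOf_eq {W} (h : SB A S σ W) : ysOf A S W = Sum.inr ⁻¹' (Prod.fst '' W) := by
  ext b
  constructor
  · intro hs
    exact ⟨_, hs, rfl⟩
  · intro hs
    have := mem_of_fst h hs
    simpa [ysOf] using this

lemma config_xs {W} (h : SB A S σ W) : S.toES.Config (xsOf A S σ W) := by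
  rw [xsOf_eq h]
  exact config_par_left h.1

lemma config_ys {W} (h : SB A S σ W) : A.toES.Config (ysOf A S W) := by
  rw [ysOf_eq h]
  exact config_par_right h.1

lemma witS_eq {z : Set (ccCompES A S σ).Evt} (hz : (ccCompES A S σ).Config z) :
    ccWitS A S σ z = xsOf A S σ (ccW A S σ z) := by
  rw [ccWitS, ccW_eq, xsOf_eq (secbij_ccW hz)]

lemma witA_eq {z : Set (ccCompES A S σ).Evt} (hz : (ccCompES A S σ).Config z) :
    ccWitA A S σ z = ysOf A S (ccW A S σ z) := by
  rw [ccWitA, ccW_eq, ysOf_eq (secbij_ccW hz)]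

lemma cc_to_inr (hA : A.toES.IsES) {b : A.Evt} :
    ∀ p, Relation.ReflTransGen (ccGen A) p (Sum.inr b) →
      (∀ c, p = Sum.inl c → ∃ d, A.pol d = true ∧ A.toES.le c d ∧ A.toES.le d b) ∧
      (∀ c, p = Sum.inr c → A.toES.le c b) := by
  obtain ⟨hrefl, htrans, -⟩ := hA
  intro p h
  induction h using Relation.ReflTransGen.head_induction_on with
  | refl =>
    constructor
    · intro c hc
      exact absurd hc (by simp)
    · intro c hc
      cases hc
      exact hrefl b
  | head h' hrest ih =>
    rcases h' with hpar | ⟨d, hd, hp, hq⟩ | ⟨d, hd, hp, hq⟩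
    · rcases par_le_elim hpar with ⟨a1, b1, hp1, hq1, h1⟩ | ⟨a1, b1, hp1, hq1, h1⟩
      · subst hp1
        obtain ⟨d, hd1, hd2, hd3⟩ := ih.1 b1 hq1
        constructor
        · rintro c hc
          cases hc
          exact ⟨d, hd1, htrans _ _ _ h1 hd2, hd3⟩
        · rintro c hc
          cases hc
      · subst hp1
        have h2 := ih.2 b1 hq1
        constructor
        · rintro c hc
          cases hc
        · rintro c hc
          cases hc
          exact htrans _ _ _ h1 h2
    · subst hp
      constructor
      · rintro c hc
        cases hc
        exact ⟨d, hd, hrefl d, ih.2 d hq⟩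
      · rintro c hc
        cases hc
    · subst hp
      obtain ⟨d', hd1, hd2, hd3⟩ := ih.1 d hq
      constructor
      · rintro c hc
        cases hc
      · rintro c hc
        cases hc
        exact htrans _ _ _ hd2 hd3

lemma cc_inl_inr (hA : A.toES.IsES) {c b : A.Evt}
    (h : Relation.ReflTransGen (ccGen A) (Sum.inl c) (Sum.inr b)) :
    ∃ d, A.pol d = true ∧ A.toES.le c d ∧ A.toES.le d b :=
  (cc_to_inr hA _ h).1 c rfl

lemma cc_inr_inr (hA : A.toES.IsES) {c b : A.Evt}
    (h : Relation.ReflTransGen (ccGen A) (Sum.inr c) (Sum.inr b)) :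
    A.toES.le c b :=
  (cc_to_inr hA _ h).2 c rfl

lemma cc_inl_le_inr {c d : A.Evt} (hd : A.pol d = true) (h : A.toES.le c d) :
    Relation.ReflTransGen (ccGen A) (Sum.inl c) (Sum.inr d) := by
  refine Relation.ReflTransGen.head (b := Sum.inl d) ?_ (Relation.ReflTransGen.single ?_)
  · exact Or.inl (h : (A.dual.par A).le (Sum.inl c) (Sum.inl d))
  · exact Or.inr (Or.inl ⟨d, hd, rfl, rfl⟩)

lemma rtg_transfer {W W' : Set ((S.Evt ⊕ A.Evt) × (A.Evt ⊕ A.Evt))} {t}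
    (ht : t ∈ W') (hstep : ∀ p q, gr A S W p q → q ∈ W' → p ∈ W') :
    ∀ p, Relation.ReflTransGen (gr A S W) p t →
      p ∈ W' ∧ Relation.ReflTransGen (gr A S W') p t := by
  intro p h
  induction h using Relation.ReflTransGen.head_induction_on with
  | refl => exact ⟨ht, Relation.ReflTransGen.refl⟩
  | head h' hrest ih =>
    have hp := hstep _ _ h' ih.1
    exact ⟨hp, ih.2.head ⟨hp, ih.1, h'.2.2⟩⟩

lemma step_down {W W' : Set ((S.Evt ⊕ A.Evt) × (A.Evt ⊕ A.Evt))}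
    (downFst : ∀ e ∈ Prod.fst '' W', ∀ e', (S.toES.par A.toES).le e' e → e' ∈ Prod.fst '' W')
    (downSnd : ∀ e ∈ Prod.snd '' W', ∀ e', (CC A).toES.le e' e → e' ∈ Prod.snd '' W')
    (memFst : ∀ p ∈ W, p.1 ∈ Prod.fst '' W' → p ∈ W')
    (memSnd : ∀ p ∈ W, p.2 ∈ Prod.snd '' W' → p ∈ W') :
    ∀ p q, gr A S W p q → q ∈ W' → p ∈ W' := by
  rintro p q ⟨hpW, hqW, h | h⟩ hq
  · exact memFst p hpW (downFst q.1 ⟨q, hq, rfl⟩ p.1 h.1)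
  · exact memSnd p hpW (downSnd q.2 ⟨q, hq, rfl⟩ p.2 h.1)

lemma memFst_of {W W'} (hW : SB A S σ W) (hW' : SB A S σ W') :
    ∀ p ∈ W, p.1 ∈ Prod.fst '' W' → p ∈ W' := by
  intro p hp h1
  have h2 := mem_of_fst hW' h1
  have h3 := pair_snd hW hp
  have hpe : p = (p.1, Sum.map σ id p.1) := Prod.ext rfl h3.symm
  rwa [hpe]

lemma memSnd_A {W' : Set ((S.Evt ⊕ A.Evt) × (A.Evt ⊕ A.Evt))} (hW' : SB A S σ W') {b : A.Evt}
    (h2 : (Sum.inr b : A.Evt ⊕ A.Evt) ∈ Prod.snd '' W') :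
    ((Sum.inr b, Sum.inr b) : (S.Evt ⊕ A.Evt) × (A.Evt ⊕ A.Evt)) ∈ W' := by
  obtain ⟨q, hq, hq2⟩ := h2
  rcases shape hW' hq with ⟨s, rfl⟩ | ⟨c, rfl⟩
  · simp at hq2
  · have : c = b := by simpa using hq2
    subst this
    exact hq

lemma memSnd_of_subset {W W'} (hW : SB A S σ W) (hW' : SB A S σ W')
    (hx : ∀ s, (Sum.inl s, Sum.inl (σ s)) ∈ W → (Sum.inl s, Sum.inl (σ s)) ∈ W') :
    ∀ p ∈ W, p.2 ∈ Prod.snd '' W' → p ∈ W' := by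
  intro p hp h2
  rcases shape hW hp with ⟨s, rfl⟩ | ⟨b, rfl⟩
  · exact hx s hp
  · exact memSnd_A hW' h2

lemma memSnd_of_inj {W W'} (hW : SB A S σ W) (hW' : SB A S σ W')
    (hinj : ∀ s u, (Sum.inl s, Sum.inl (σ s)) ∈ W → (Sum.inl u, Sum.inl (σ u)) ∈ W' →
      σ s = σ u → s = u) :
    ∀ p ∈ W, p.2 ∈ Prod.snd '' W' → p ∈ W' := by
  intro p hp h2
  rcases shape hW hp with ⟨s, rfl⟩ | ⟨b, rfl⟩
  · obtain ⟨q, hq, hq2⟩ := h2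
    rcases shape hW' hq with ⟨u, rfl⟩ | ⟨c, rfl⟩
    · have he : σ u = σ s := by simpa using hq2
      have := hinj s u hp hq he.symm
      subst this
      rwa [he] at hq ⊢
    · simp at hq2
  · exact memSnd_A hW' h2

lemma injOn_xs (hσ : IsPreStrategy S A σ) {W} (hW : SB A S σ W) :
    Set.InjOn σ (xsOf A S σ W) :=
  hσ.1.2 _ (config_xs hW)

lemma graph_sub {z : Set (ccCompES A S σ).Evt} {G : (ccCompES A S σ).Evt}
    (hG : G ∈ z) : G.val.val ⊆ ccW A S σ z :=
  fun p hp => mem_ccW.2 ⟨G, hG, hp⟩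

lemma graph_eq_dcl (hσ : IsPreStrategy S A σ) {z : Set (ccCompES A S σ).Evt}
    (hz : (ccCompES A S σ).Config z)
    {G : (ccCompES A S σ).Evt} (hG : G ∈ z) {a : A.Evt}
    (ha1 : ((Sum.inr a, Sum.inr a) : (S.Evt ⊕ A.Evt) × (A.Evt ⊕ A.Evt)) ∈ G.val.val)
    (ha2 : ∀ q ∈ G.val.val, Relation.ReflTransGen (gr A S G.val.val) q (Sum.inr a, Sum.inr a)) :
    G.val.val = {p | p ∈ ccW A S σ z ∧
      Relation.ReflTransGen (gr A S (ccW A S σ z)) p (Sum.inr a, Sum.inr a)} := by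
  have hWsec := secbij_ccW hz
  have hGsec : SB A S σ G.val.val := G.val.prop.1
  have hsub : G.val.val ⊆ ccW A S σ z := graph_sub hG
  apply Set.Subset.antisymm
  · intro p hp
    exact ⟨hsub hp, rtg_mono hsub (ha2 p hp)⟩
  · intro p hp
    have hinj : ∀ s u, (Sum.inl s, Sum.inl (σ s)) ∈ ccW A S σ z →
        (Sum.inl u, Sum.inl (σ u)) ∈ G.val.val → σ s = σ u → s = u := by
      intro s u hs hu he
      exact injOn_xs hσ hWsec hs (hsub hu) he
    have hstep := step_down (W := ccW A S σ z) (W' := G.val.val)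
      hGsec.1.2.2 hGsec.2.1.2.2 (memFst_of hWsec hGsec) (memSnd_of_inj hWsec hGsec hinj)
    exact (rtg_transfer ha1 hstep p hp.2).1

lemma mem_of_val_subset (hσ : IsPreStrategy S A σ) {z : Set (ccCompES A S σ).Evt}
    (hz : (ccCompES A S σ).Config z) {K : (ccCompES A S σ).Evt}
    (hsub : K.val.val ⊆ ccW A S σ z) : K ∈ z := by
  obtain ⟨aK, haK, htopK⟩ := (K.prop : ccVis A S σ K.val)
  have htK : ((Sum.inr aK, Sum.inr aK) : (S.Evt ⊕ A.Evt) × (A.Evt ⊕ A.Evt)) ∈ ccW A S σ z :=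
    hsub haK
  obtain ⟨G, hG, htG⟩ := mem_ccW.1 htK
  obtain ⟨aG, haG, htopG⟩ := (G.prop : ccVis A S σ G.val)
  have hGeq := graph_eq_dcl hσ hz hG haG htopG
  have hKG : Relation.ReflTransGen (gr A S (ccW A S σ z)) (Sum.inr aK, Sum.inr aK)
      (Sum.inr aG, Sum.inr aG) := rtg_mono (graph_sub hG) (htopG _ htG)
  have hsub2 : K.val.val ⊆ G.val.val := by
    intro q hq
    rw [hGeq]
    exact ⟨hsub hq, (rtg_mono hsub (htopK q hq)).trans hKG⟩
  exact hz.2.2 G hG K hsub2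

lemma label_eq {K : (ccCompES A S σ).Evt} {a : A.Evt}
    (h1 : ((Sum.inr a, Sum.inr a) : (S.Evt ⊕ A.Evt) × (A.Evt ⊕ A.Evt)) ∈ K.val.val)
    (h2 : ∀ q ∈ K.val.val, Relation.ReflTransGen (gr A S K.val.val) q (Sum.inr a, Sum.inr a)) :
    ccCompLabel A S σ K = a := by
  unfold ccCompLabel
  obtain ⟨hm, ht⟩ := Exists.choose_spec (K.prop : ccVis A S σ K.val)
  have hsec : SecuredOn (S.toES.par A.toES) (CC A).toES K.val.val := K.val.prop.1.2.2.2.2.2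
  have e1 := ht _ h1
  have e2 := h2 _ hm
  have h3 := hsec _ _ e2 e1
  have h4 : Sum.inr (Exists.choose (K.prop : ccVis A S σ K.val)) = (Sum.inr a : A.Evt ⊕ A.Evt) :=
    congrArg Prod.snd h3
  simpa using h4

lemma prime_mem (hσ : IsPreStrategy S A σ) {z : Set (ccCompES A S σ).Evt}
    (hz : (ccCompES A S σ).Config z) {a : A.Evt}
    (ha : ((Sum.inr a, Sum.inr a) : (S.Evt ⊕ A.Evt) × (A.Evt ⊕ A.Evt)) ∈ ccW A S σ z) :
    ∃ K : (ccCompES A S σ).Evt, K ∈ z ∧ ccCompLabel A S σ K = a ∧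
      K.val.val = {p | p ∈ ccW A S σ z ∧
        Relation.ReflTransGen (gr A S (ccW A S σ z)) p (Sum.inr a, Sum.inr a)} := by
  have hW := secbij_ccW hz
  set W := ccW A S σ z with hWdef
  set t : (S.Evt ⊕ A.Evt) × (A.Evt ⊕ A.Evt) := (Sum.inr a, Sum.inr a) with htdef
  set K : Set ((S.Evt ⊕ A.Evt) × (A.Evt ⊕ A.Evt)) :=
    {p | p ∈ W ∧ Relation.ReflTransGen (gr A S W) p t} with hKdef
  have hKsub : K ⊆ W := fun p hp => hp.1
  have htK : t ∈ K := ⟨ha, Relation.ReflTransGen.refl⟩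
  have hstep : ∀ p q, gr A S W p q → q ∈ K → p ∈ K :=
    fun p q hpq hq => ⟨hpq.1, hq.2.head hpq⟩
  have htrans := rtg_transfer (W := W) (W' := K) htK hstep
  have hWfin : W.Finite := by
    have h1 : (Prod.fst '' W).Finite := hW.1.1
    have h2 : W ⊆ (fun e => (e, Sum.map σ id e)) '' (Prod.fst '' W) := by
      intro p hp
      exact ⟨p.1, ⟨p, hp, rfl⟩, Prod.ext rfl (pair_snd hW hp)⟩
    exact (h1.image _).subset h2
  have hKsec : SB A S σ K := by
    refine ⟨⟨(hWfin.subset hKsub).image _, ?_, ?_⟩, ⟨(hWfin.subset hKsub).image _, ?_, ?_⟩,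
      ?_, ?_, ?_, ?_⟩
    · intro Y hY hYf
      exact hW.1.2.1 Y (hY.trans (Set.image_mono hKsub)) hYf
    · intro e he e' hle
      obtain ⟨p, hp, rfl⟩ := he
      have he' : e' ∈ Prod.fst '' W := hW.1.2.2 p.1 ⟨p, hKsub hp, rfl⟩ e' hle
      have hp' : (e', Sum.map σ id e') ∈ W := mem_of_fst hW he'
      by_cases hcase : e' = p.1
      · subst hcase
        exact ⟨p, hp, rfl⟩
      · have hgr : gr A S W (e', Sum.map σ id e') p := ⟨hp', hKsub hp, Or.inl ⟨hle, hcase⟩⟩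
        exact ⟨_, hstep _ _ hgr hp, rfl⟩
    · intro Y hY hYf
      exact hW.2.1.2.1 Y (hY.trans (Set.image_mono hKsub)) hYf
    · intro c hc c' hle
      obtain ⟨p, hp, rfl⟩ := hc
      have hc' : c' ∈ Prod.snd '' W := hW.2.1.2.2 p.2 ⟨p, hKsub hp, rfl⟩ c' hle
      obtain ⟨q, hq, hq2⟩ := hc'
      by_cases hcase : c' = p.2
      · exact ⟨p, hp, hcase.symm⟩
      · have hgr : gr A S W q p := by
          refine ⟨hq, hKsub hp, Or.inr ⟨?_, ?_⟩⟩
          · rw [hq2]; exact hle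
          · rw [hq2]; exact hcase
        exact ⟨q, hstep _ _ hgr hp, hq2⟩
    · exact fun p hp => pair_snd hW (hKsub hp)
    · rintro s ⟨p, hp, rfl⟩ tt ⟨q, hq, rfl⟩ heq
      have h1 := pair_snd hW (hKsub hp)
      have h2 : q.2 = p.2 := by
        have : Sum.map σ id p.1 = q.2 := heq
        rw [← this, h1]
      have h3 : (p.1, q.2) = p := Prod.ext rfl h2
      rwa [h3]
    · ext b
      constructor
      · rintro ⟨e, ⟨p, hp, rfl⟩, rfl⟩
        exact ⟨p.2, ⟨p, hp, rfl⟩, (pair_snd hW (hKsub hp)).symm⟩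
      · rintro ⟨c, ⟨p, hp, rfl⟩, rfl⟩
        exact ⟨p.1, ⟨p, hp, rfl⟩, pair_snd hW (hKsub hp)⟩
    · intro p q h1 h2
      exact hW.2.2.2.2.2 p q (rtg_mono hKsub h1) (rtg_mono hKsub h2)
  have hKprime : IsPrime (S.toES.par A.toES) (CC A).toES K :=
    ⟨t, htK, fun q hq => (htrans q hq.2).2⟩
  refine ⟨⟨⟨K, hKsec, hKprime⟩, ?_⟩, ?_, ?_, rfl⟩
  · exact ⟨a, htK, fun q hq => (htrans q hq.2).2⟩
  · exact mem_of_val_subset hσ hz hKsub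
  · exact label_eq htK (fun q hq => (htrans q hq.2).2)

lemma fwd_reach (hA : A.toES.IsES) {z : Set (ccCompES A S σ).Evt}
    (hz : (ccCompES A S σ).Config z) {a : A.Evt}
    (ha : ((Sum.inr a, Sum.inr a) : (S.Evt ⊕ A.Evt) × (A.Evt ⊕ A.Evt)) ∈ ccW A S σ z) :
    ∀ p, Relation.ReflTransGen (gr A S (ccW A S σ z)) p (Sum.inr a, Sum.inr a) →
      (∃ b, p = ((Sum.inr b, Sum.inr b) : (S.Evt ⊕ A.Evt) × (A.Evt ⊕ A.Evt)) ∧ A.toES.le b a) ∨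
      (∃ d, A.pol d = true ∧
        ((Sum.inr d, Sum.inr d) : (S.Evt ⊕ A.Evt) × (A.Evt ⊕ A.Evt)) ∈ ccW A S σ z ∧
        Relation.ReflTransGen (gr A S (ccW A S σ z)) p (Sum.inr d, Sum.inr d)) := by
  have hW := secbij_ccW hz
  have hay : a ∈ ysOf A S (ccW A S σ z) := ha
  intro p h
  induction h using Relation.ReflTransGen.head_induction_on with
  | refl => exact Or.inl ⟨a, rfl, hA.1 a⟩
  | head h' hrest ih =>
    obtain ⟨hpW, hqW, hlt⟩ := h'
    rcases ih with ⟨b, rfl, hba⟩ | ⟨d, hd1, hd2, hd3⟩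
    · rcases hlt with ⟨hle, hne⟩ | ⟨hle, hne⟩
      · rcases par_le_elim hle with ⟨a1, b1, hp1, hq1, h1⟩ | ⟨a1, b1, hp1, hq1, h1⟩
        · simp at hq1
        · rcases shape hW hpW with ⟨s, rfl⟩ | ⟨c, rfl⟩
          · simp at hp1
          · left
            refine ⟨c, rfl, hA.2.1 _ _ _ ?_ hba⟩
            have hc : Sum.inr c = Sum.inr a1 := hp1
            have hb : Sum.inr b = Sum.inr b1 := hq1
            cases hc
            cases hb
            exact h1
      · rcases shape hW hpW with ⟨s, rfl⟩ | ⟨c, rfl⟩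
        · have hcc : Relation.ReflTransGen (ccGen A) (Sum.inl (σ s)) (Sum.inr b) := hle
          obtain ⟨d, hdpos, hd1, hd2⟩ := cc_inl_inr hA hcc
          have hda : A.toES.le d a := hA.2.1 _ _ _ hd2 hba
          have hdy : ((Sum.inr d, Sum.inr d) : (S.Evt ⊕ A.Evt) × (A.Evt ⊕ A.Evt)) ∈
              ccW A S σ z := (config_ys hW).2.2 a hay d hda
          right
          refine ⟨d, hdpos, hdy, Relation.ReflTransGen.single ⟨hpW, hdy, Or.inr ⟨?_, ?_⟩⟩⟩
          · exact cc_inl_le_inr hdpos hd1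
          · exact Sum.inl_ne_inr
        · left
          have hcb : A.toES.le c b := cc_inr_inr hA hle
          exact ⟨c, rfl, hA.2.1 _ _ _ hcb hba⟩
    · right
      exact ⟨d, hd1, hd2, hd3.head ⟨hpW, hqW, hlt⟩⟩

lemma trans_fwd (hσ : IsPreStrategy S A σ) {z z' : Set (ccCompES A S σ).Evt}
    (hz : (ccCompES A S σ).Config z) (hz' : (ccCompES A S σ).Config z')
    (hxx : xsOf A S σ (ccW A S σ z) ⊆ xsOf A S σ (ccW A S σ z')) {a : A.Evt}
    (ha' : ((Sum.inr a, Sum.inr a) : (S.Evt ⊕ A.Evt) × (A.Evt ⊕ A.Evt)) ∈ ccW A S σ z') :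
    ∀ p, Relation.ReflTransGen (gr A S (ccW A S σ z)) p (Sum.inr a, Sum.inr a) →
      p ∈ ccW A S σ z' := by
  have hW := secbij_ccW hz
  have hW' := secbij_ccW hz'
  have hstep := step_down (W := ccW A S σ z) (W' := ccW A S σ z')
    hW'.1.2.2 hW'.2.1.2.2 (memFst_of hW hW') (memSnd_of_subset hW hW' (fun s hs => hxx hs))
  exact fun p hp => (rtg_transfer ha' hstep p hp).1

lemma trans_bwd (hσ : IsPreStrategy S A σ) {z z' : Set (ccCompES A S σ).Evt}
    (hz : (ccCompES A S σ).Config z) (hz' : (ccCompES A S σ).Config z')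
    (hxx : xsOf A S σ (ccW A S σ z) ⊆ xsOf A S σ (ccW A S σ z')) {a : A.Evt}
    (ha : ((Sum.inr a, Sum.inr a) : (S.Evt ⊕ A.Evt) × (A.Evt ⊕ A.Evt)) ∈ ccW A S σ z) :
    ∀ p, Relation.ReflTransGen (gr A S (ccW A S σ z')) p (Sum.inr a, Sum.inr a) →
      p ∈ ccW A S σ z := by
  have hW := secbij_ccW hz
  have hW' := secbij_ccW hz'
  have hinj : ∀ s u, (Sum.inl s, Sum.inl (σ s)) ∈ ccW A S σ z' →
      (Sum.inl u, Sum.inl (σ u)) ∈ ccW A S σ z → σ s = σ u → s = u := by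
    intro s u hs hu he
    exact injOn_xs hσ hW' hs (hxx hu) he
  have hstep := step_down (W := ccW A S σ z') (W' := ccW A S σ z)
    hW.1.2.2 hW.2.1.2.2 (memFst_of hW' hW) (memSnd_of_inj hW' hW hinj)
  exact fun p hp => (rtg_transfer ha hstep p hp).1

end CCAux


/-- for configurations `z, z'` of `CC_A ⊙ S` with minimal
witnesses represented by `(x, y)` and `(x', y')`, one has
`z ⊑_{CC_A ⊙ S} z'` iff `y ⊑_A y'` and `x ⊆ x'`. -/
theorem scott_order_on_copycat_composition
    (A S : ESP) (hA : A.toES.IsES) (hS : S.toES.IsES)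
    (σ : S.Evt → A.Evt) (hσ : IsPreStrategy S A σ)
    (z z' : Set (ccCompES A S σ).Evt)
    (hz : (ccCompES A S σ).Config z) (hz' : (ccCompES A S σ).Config z') :
    scottLE (ccCompESP A S σ).pol z z' ↔
      (scottLE A.pol (ccWitA A S σ z) (ccWitA A S σ z') ∧
       ccWitS A S σ z ⊆ ccWitS A S σ z') := by
  classical
  rw [CCAux.witA_eq hz, CCAux.witA_eq hz', CCAux.witS_eq hz, CCAux.witS_eq hz']
  constructor
  · rintro ⟨⟨-, hneg⟩, ⟨-, hpos⟩⟩
    have hxx : CCAux.xsOf A S σ (CCAux.ccW A S σ z) ⊆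
        CCAux.xsOf A S σ (CCAux.ccW A S σ z') := by
      intro s hs
      obtain ⟨G, hGz, hsG⟩ := CCAux.mem_ccW.1 hs
      obtain ⟨aG, haG, htopG⟩ := (G.prop : ccVis A S σ G.val)
      have h1 := CCAux.rtg_mono (CCAux.graph_sub hGz) (htopG _ hsG)
      rcases CCAux.fwd_reach hA hz (CCAux.graph_sub hGz haG) _ h1 with
        ⟨b, heq, -⟩ | ⟨d, hd1, hd2, hd3⟩
      · exact absurd heq (by simp)
      · obtain ⟨K, hKz, hKlab, hKval⟩ := CCAux.prime_mem hσ hz hd2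
        have hKz' : K ∈ z' := by
          by_contra hne
          have h2 := hneg K hKz (fun h => hne h.2)
          have h3 : A.pol (ccCompLabel A S σ K) = false := h2
          rw [hKlab, hd1] at h3
          simp at h3
        have hmem : (Sum.inl s, Sum.inl (σ s)) ∈ CCAux.ccW A S σ z' :=
          CCAux.mem_ccW.2 ⟨K, hKz', by rw [hKval]; exact ⟨hs, hd3⟩⟩
        exact hmem
    refine ⟨⟨⟨Set.inter_subset_left, ?_⟩, ⟨Set.inter_subset_right, ?_⟩⟩, hxx⟩
    · intro b hb hbn
      have hb' : b ∉ CCAux.ysOf A S (CCAux.ccW A S σ z') := fun h => hbn ⟨hb, h⟩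
      obtain ⟨K, hKz, hKlab, hKval⟩ := CCAux.prime_mem hσ hz hb
      have hKnot : K ∉ z' := by
        intro hK'
        refine hb' (CCAux.mem_ccW.2 ⟨K, hK', ?_⟩)
        rw [hKval]
        exact ⟨hb, Relation.ReflTransGen.refl⟩
      have h2 := hneg K hKz (fun h => hKnot h.2)
      have h3 : A.pol (ccCompLabel A S σ K) = false := h2
      rwa [hKlab] at h3
    · intro b hb hbn
      have hb' : b ∉ CCAux.ysOf A S (CCAux.ccW A S σ z) := fun h => hbn ⟨h, hb⟩
      obtain ⟨K, hKz', hKlab, hKval⟩ := CCAux.prime_mem hσ hz' hb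
      have hKnot : K ∉ z := by
        intro hK
        refine hb' (CCAux.mem_ccW.2 ⟨K, hK, ?_⟩)
        rw [hKval]
        exact ⟨hb, Relation.ReflTransGen.refl⟩
      have h2 := hpos K hKz' (fun h => hKnot h.1)
      have h3 : A.pol (ccCompLabel A S σ K) = true := h2
      rwa [hKlab] at h3
  · rintro ⟨⟨⟨-, hyneg⟩, ⟨-, hypos⟩⟩, hxx⟩
    constructor
    · refine ⟨Set.inter_subset_left, ?_⟩
      intro G hGz hGn
      have hGz' : G ∉ z' := fun h => hGn ⟨hGz, h⟩
      obtain ⟨aG, haG, htopG⟩ := (G.prop : ccVis A S σ G.val)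
      have hlab : ccCompLabel A S σ G = aG := CCAux.label_eq haG htopG
      have haGy : aG ∈ CCAux.ysOf A S (CCAux.ccW A S σ z) := CCAux.graph_sub hGz haG
      by_cases hy' : aG ∈ CCAux.ysOf A S (CCAux.ccW A S σ z')
      · exfalso
        apply hGz'
        apply CCAux.mem_of_val_subset hσ hz'
        intro q hq
        exact CCAux.trans_fwd hσ hz hz' hxx hy' q
          (CCAux.rtg_mono (CCAux.graph_sub hGz) (htopG q hq))
      · have h2 := hyneg aG haGy (fun h => hy' h.2)
        show A.pol (ccCompLabel A S σ G) = false
        rwa [hlab]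
    · refine ⟨Set.inter_subset_right, ?_⟩
      intro G hGz' hGn
      have hGz : G ∉ z := fun h => hGn ⟨h, hGz'⟩
      obtain ⟨aG, haG, htopG⟩ := (G.prop : ccVis A S σ G.val)
      have hlab : ccCompLabel A S σ G = aG := CCAux.label_eq haG htopG
      have haGy' : aG ∈ CCAux.ysOf A S (CCAux.ccW A S σ z') := CCAux.graph_sub hGz' haG
      by_cases hy : aG ∈ CCAux.ysOf A S (CCAux.ccW A S σ z)
      · exfalso
        apply hGz
        apply CCAux.mem_of_val_subset hσ hz
        intro q hq
        exact CCAux.trans_bwd hσ hz hz' hxx hy q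
          (CCAux.rtg_mono (CCAux.graph_sub hGz') (htopG q hq))
      · have h2 := hypos aG haGy' (fun h => hy h.1)
        show A.pol (ccCompLabel A S σ G) = true
        rwa [hlab]
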